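/- Let k ≥ 4 and let σ1 ∈ S_k be given by σ1(1) = k, σ1(2) = 2, σ1(i) = k+2−i for 3 ≤ i ≤ k−1, and σ1(k) = 1. Suppose σ ∈ S_k satisfies σ ≤ σ1 in the Bruhat order and D(σ) ∪ D(σ^{−1}) ⊆ {2, k}. Then either σ = σ1 or σ is given by σ(1) = 2, σ(2) = 1, and σ(i) = k+3−i for 3 ≤ i ≤ k. -/

import Mathlib

/-! ## Segments and multisegments -/

structure Segment where
  a : ℤ
  b : ℤ
  nonempty : a ≤ b

namespace Segment

/-- `Δ ≺ Δ'`. -/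
def prec (Δ Δ' : Segment) : Prop :=
  Δ.a < Δ'.a ∧ Δ'.a ≤ Δ.b + 1 ∧ Δ.b < Δ'.b

def linked (Δ Δ' : Segment) : Prop := prec Δ Δ' ∨ prec Δ' Δ

/-- `←Δ = [a-1, b-1]`. -/
def shiftl (Δ : Segment) : Segment :=
  ⟨Δ.a - 1, Δ.b - 1, by have := Δ.nonempty; omega⟩

end Segment

abbrev Multisegment := Multiset Segment

/-- `Step m n` means `m ⊢ n`: `m` is obtained from `n` by replacing a pair of linked
segments of `n` by its offspring. -/
def Step (m n : Multisegment) : Prop :=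
  ∃ (Δ Δ' : Segment) (r : Multisegment),
    Segment.prec Δ Δ' ∧ n = Δ ::ₘ Δ' ::ₘ r ∧
    ((Δ'.a ≤ Δ.b ∧ ∃ E F : Segment,
        E.a = Δ.a ∧ E.b = Δ'.b ∧ F.a = Δ'.a ∧ F.b = Δ.b ∧ m = E ::ₘ F ::ₘ r) ∨
     (Δ'.a = Δ.b + 1 ∧ ∃ E : Segment, E.a = Δ.a ∧ E.b = Δ'.b ∧ m = E ::ₘ r))

/-- `Obt m n` means `m ⊨ n`: reflexive-transitive closure of `⊢`. -/
def Obt : Multisegment → Multisegment → Prop := Relation.ReflTransGen Step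

def PairwiseUnlinked (m : Multisegment) : Prop :=
  ∀ (Δ Δ' : Segment) (r : Multisegment), m = Δ ::ₘ Δ' ::ₘ r → ¬ Segment.linked Δ Δ'

/-- `StepN l m n` : there is a chain of `l` steps `m = m_l ⊢ m_{l-1} ⊢ ⋯ ⊢ m_1 ⊢ n`. -/
def StepN : ℕ → Multisegment → Multisegment → Prop
  | 0, m, n => m = n
  | l + 1, m, n => ∃ p, Step m p ∧ StepN l p n

/-- The complexity `c(m)`: the maximal `l` for which there is a chain of `l` steps ending at `m`. -/
noncomputable def complexity (m : Multisegment) : ℕ :=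
  sSup {l : ℕ | ∃ m', StepN l m' m}

/-- Almost pairwise unlinked. -/
def APU (m : Multisegment) : Prop :=
  ∃ m', PairwiseUnlinked m' ∧ Step m' m

/-- The depth `d(m)`: the number of APU multisegments `n` with `n ⊨ m`. -/
noncomputable def depth (m : Multisegment) : ℕ :=
  {n : Multisegment | APU n ∧ Obt n m}.ncard

def Regular (m : Multisegment) : Prop :=
  (m.map Segment.a).Nodup ∧ (m.map Segment.b).Nodup

def IsBalanced (m : Multisegment) : Prop :=
  Regular m ∧ depth m = complexity m

/-! ## Enumerated multisegments and the (GLS) condition -/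

/-- The multisegment `Δ_0 + ⋯ + Δ_{k-1}` attached to an enumeration `Δ : ℕ → Segment`. -/
def msOf (k : ℕ) (Δ : ℕ → Segment) : Multisegment :=
  ↑((List.range k).map Δ)

def Xset (k : ℕ) (Δ : ℕ → Segment) : Set (ℕ × ℕ) :=
  {p | p.1 < k ∧ p.2 < k ∧ (Δ p.1).prec (Δ p.2)}

def Xtil (k : ℕ) (Δ : ℕ → Segment) : Set (ℕ × ℕ) :=
  {p | p.1 < k ∧ p.2 < k ∧ ((Δ p.1).shiftl).prec (Δ p.2)}

open Classical in
/-- The vector `x_{i,j}(λ) ∈ ℂ^{X̃_m}` (viewed inside the functions `ℕ × ℕ → ℂ`). -/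
noncomputable def glsVec (k : ℕ) (Δ : ℕ → Segment) (lam : ℕ → ℕ → ℂ) (i j : ℕ) :
    ℕ × ℕ → ℂ := fun p =>
  (if p.1 = i ∧ (p.2, j) ∈ Xset k Δ ∧ (i, p.2) ∈ Xtil k Δ then lam p.2 j else 0) -
  (if p.2 = j ∧ (p.1, j) ∈ Xtil k Δ ∧ (i, p.1) ∈ Xset k Δ then lam i p.1 else 0)

/-- Condition (GLS). -/
def GLS (k : ℕ) (Δ : ℕ → Segment) : Prop :=
  ∃ lam : ℕ → ℕ → ℂ,
    LinearIndependent ℂ (fun p : Xset k Δ => glsVec k Δ lam p.1.1 p.1.2)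

/-- The relation `⤳` between `X_m` and `X̃_m`. -/
def leadsTo (Δ : ℕ → Segment) (x y : ℕ × ℕ) : Prop :=
  (x.1 = y.1 ∧ (Δ y.2).prec (Δ x.2)) ∨ (x.2 = y.2 ∧ (Δ x.1).prec (Δ y.1))

/-- `N_{i,j} = {y ∈ X̃_m : (i,j) ⤳ y}`. -/
def Nset (k : ℕ) (Δ : ℕ → Segment) (x : ℕ × ℕ) : Set (ℕ × ℕ) :=
  {y ∈ Xtil k Δ | leadsTo Δ x y}

/-- The labelled relation `x ⤳^r y`. -/
def LabRel (k : ℕ) (Δ : ℕ → Segment) (x r y : ℕ × ℕ) : Prop :=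
  (x.1 = y.1 ∧ r = (y.2, x.2) ∧ x ∈ Xset k Δ ∧ r ∈ Xset k Δ ∧ y ∈ Xtil k Δ) ∨
  (x.2 = y.2 ∧ r = (x.1, y.1) ∧ x ∈ Xset k Δ ∧ r ∈ Xset k Δ ∧ y ∈ Xtil k Δ)

/-- Multisegments of type 4231. -/
def Type4231 (m : Multisegment) : Prop :=
  ∃ (k : ℕ) (Δ : ℕ → Segment), 4 ≤ k ∧ m = msOf k Δ ∧ Regular m ∧
    (∀ i j, i < j → j < k → (Δ j).b < (Δ i).b) ∧
    (∀ i, 2 ≤ i → i + 1 < k → (Δ (i + 1)).prec (Δ i)) ∧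
    (Δ 2).prec (Δ 0) ∧
    (Δ (k - 1)).a < (Δ 1).a ∧ (Δ 1).a < (Δ (k - 2)).a

/-- Multisegments of type 3412. -/
def Type3412 (m : Multisegment) : Prop :=
  ∃ (k : ℕ) (Δ : ℕ → Segment), 4 ≤ k ∧ m = msOf k Δ ∧ Regular m ∧
    (∀ i j, i < j → j < k → (Δ j).b < (Δ i).b) ∧
    (∀ i, 3 ≤ i → i + 1 < k → (Δ (i + 1)).prec (Δ i)) ∧
    (Δ 3).prec (Δ 1) ∧
    (Δ 2).a < (Δ (k - 1)).a ∧ (Δ (k - 1)).a < (Δ 0).a ∧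
    (Δ 0).a < (Δ (if k = 4 then 1 else k - 2)).a

/-- `Δ_i` is a detachable segment of `Δ_0 + ⋯ + Δ_{k-1}`. -/
def Detachable (k : ℕ) (Δ : ℕ → Segment) (i : ℕ) : Prop :=
  (∀ j, j < k → j ≠ i → ¬ (Δ i).prec (Δ j) ∧ ¬ ((Δ i).shiftl).prec (Δ j)) ∨
  (∀ j, j < k → j ≠ i → ¬ (Δ j).prec (Δ i) ∧ ¬ ((Δ j).shiftl).prec (Δ i))

/-! ## Permutations, Bruhat order, smooth pairs -/

/-- The rank function `r_σ(i,j)` (0-based). -/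
def rankFn {k : ℕ} (σ : Equiv.Perm (Fin k)) (i j : Fin k) : ℕ :=
  (Finset.univ.filter fun u : Fin k => u ≤ i ∧ σ u ≤ j).card

/-- The Bruhat order, via the rank-function characterization. -/
def BruhatLE {k : ℕ} (τ σ : Equiv.Perm (Fin k)) : Prop :=
  ∀ i j : Fin k, rankFn σ i j ≤ rankFn τ i j

/-- The length `ℓ(σ)`. -/
def lenPerm {k : ℕ} (σ : Equiv.Perm (Fin k)) : ℕ :=
  (Finset.univ.filter fun p : Fin k × Fin k => p.1 < p.2 ∧ σ p.2 < σ p.1).card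

def IsTransposition {k : ℕ} (t : Equiv.Perm (Fin k)) : Prop :=
  ∃ i j : Fin k, i ≠ j ∧ t = Equiv.swap i j

/-- `(σ, σ0)` is a smooth pair. -/
def SmoothPair {k : ℕ} (σ0 σ : Equiv.Perm (Fin k)) : Prop :=
  BruhatLE σ0 σ ∧
    {t : Equiv.Perm (Fin k) | IsTransposition t ∧ BruhatLE (σ0 * t) σ}.ncard = lenPerm σ

/-- The ascent set `D(σ)` of a permutation, in 1-based indexing. -/
def Dset {k : ℕ} (σ : Equiv.Perm (Fin k)) : Set ℕ :=
  {i | ∃ (h1 : 1 ≤ i) (h2 : i < k), (σ ⟨i - 1, by omega⟩ : ℕ) < (σ ⟨i, h2⟩ : ℕ)} ∪ {k}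

/-- The flattened permutation `rmv_i(σ)`. -/
def rmv {k : ℕ} (σ : Equiv.Perm (Fin (k + 1))) (i : Fin (k + 1)) : Equiv.Perm (Fin k) :=
  ((finSuccAboveEquiv i).trans
    (σ.subtypeEquiv fun x => not_congr (EmbeddingLike.apply_eq_iff_eq σ).symm)).trans
    (finSuccAboveEquiv (σ i)).symm

/-! ## Bi-sequences -/

structure BiSeq (k : ℕ) where
  a : Fin k → ℤ
  b : Fin k → ℤ
  mono_a : Monotone a
  anti_b : Antitone b
  compat : ∀ i : Fin k, a i.rev ≤ b i + 1

def RegularBS {k : ℕ} (A : BiSeq k) : Prop := StrictMono A.a ∧ StrictAnti A.b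

/-- `σ` satisfies the defining recursion of `σ0(A)`. -/
def Sigma0Spec {k : ℕ} (A : BiSeq k) (σ : Equiv.Perm (Fin k)) : Prop :=
  ∀ i : Fin k,
    A.a (σ.symm i) ≤ A.b i + 1 ∧
    ∀ j : Fin k, A.a j ≤ A.b i + 1 → (∀ i' : Fin k, i < i' → σ.symm i' ≠ j) →
      j ≤ σ.symm i

def Avoids213 {k : ℕ} (σ : Equiv.Perm (Fin k)) : Prop :=
  ¬ ∃ i j l : Fin k, i < j ∧ j < l ∧ σ j < σ i ∧ σ i < σ l

/-- The multisegment `m_σ(A)`, consisting of the nonempty intervals among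
`[a_{σ⁻¹(i)}, b_i]`. -/
def mOf {k : ℕ} (A : BiSeq k) (σ : Equiv.Perm (Fin k)) : Multisegment :=
  ((Finset.univ.filter fun i : Fin k => A.a (σ.symm i) ≤ A.b i).attach.val).map
    fun i => { a := A.a (σ.symm i.1), b := A.b i.1,
               nonempty := by have := Finset.mem_filter.mp i.2; exact this.2 }

/-! ## Permutation matrices -/

def PermMat {k : ℕ} (σ : Equiv.Perm (Fin k)) : Matrix (Fin k) (Fin k) ℕ :=
  fun i j => if σ i = j then 1 else 0

/-- The equivalence relation generated by `i ∼ j` whenever `M_{i,l} = M_{j,l} = 1` for some `l`. -/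
def matRel {k : ℕ} (M : Matrix (Fin k) (Fin k) ℕ) : Fin k → Fin k → Prop :=
  Relation.EqvGen (fun i j => ∃ l, M i l = 1 ∧ M j l = 1)

private lemma chain_lemma (k lo : ℕ) (f : ℕ → ℕ)
    (h : ∀ i, lo + 1 ≤ i → i < k → f i < f (i - 1)) :
    ∀ a b, lo ≤ a → a < b → b < k → f b < f a := by
  intro a b ha
  induction b with
  | zero => intro h1 h2; omega
  | succ n ih =>
    intro hab hb
    have h1 : f (n + 1) < f n := by
      have := h (n + 1) (by omega) hb
      simpa using this
    rcases eq_or_lt_of_le (Nat.lt_succ_iff.mp hab) with rfl | hlt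
    · exact h1
    · exact h1.trans (ih hlt (by omega))

private lemma low_lemma (k lo c : ℕ) (f : ℕ → ℕ)
    (h : ∀ a b, lo ≤ a → a < b → b < k → f b < f a)
    (hbase : c ≤ f (k - 1)) :
    ∀ i, lo ≤ i → i < k → c + (k - 1 - i) ≤ f i := by
  have key : ∀ d i, lo ≤ i → i + d = k - 1 → i < k → c + d ≤ f i := by
    intro d
    induction d with
    | zero =>
      intro i _ he _
      have : i = k - 1 := by omega
      subst this; simpa using hbase
    | succ n ih =>
      intro i hi he hik
      have h1 : f (i + 1) < f i := h i (i + 1) hi (by omega) (by omega)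
      have h2 := ih (i + 1) (by omega) (by omega) (by omega)
      omega
  intro i hi hik
  have := key (k - 1 - i) i hi (by omega) hik
  omega

private lemma up_lemma (k t B : ℕ) (f : ℕ → ℕ)
    (hchain : ∀ a b, 2 ≤ a → a < b → b < k → f b < f a)
    (h2 : f 2 + 2 = t + 2)
    (hlow : ∀ i, 2 ≤ i → i ≤ B → t + 2 ≤ f i + i)
    (hB : B < k) :
    ∀ i, 2 ≤ i → i ≤ B → f i + i = t + 2 := by
  intro i
  induction i with
  | zero => omega
  | succ n ih =>
    intro h2i hiB
    rcases Nat.lt_or_ge n 2 with hn | hn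
    · have hn1 : n + 1 = 2 := by omega
      rw [hn1]; omega
    · have hlt : f (n + 1) < f n := hchain n (n + 1) hn (by omega) (by omega)
      have e1 := ih hn (by omega)
      have e2 := hlow (n + 1) (by omega) hiB
      omega

theorem statement12 (k : ℕ) (hk : 4 ≤ k) (σ1 σ : Equiv.Perm (Fin k))
    (hσ1 : ∀ i : Fin k, (σ1 i : ℕ) + 1 =
      if (i : ℕ) + 1 = 1 then k
      else if (i : ℕ) + 1 = 2 then 2
      else if (i : ℕ) + 1 = k then 1
      else k + 2 - ((i : ℕ) + 1))
    (hle : BruhatLE σ σ1)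
    (hD : Dset σ ∪ Dset σ⁻¹ ⊆ ({2, k} : Set ℕ)) :
    σ = σ1 ∨ ∀ i : Fin k, (σ i : ℕ) + 1 =
      if (i : ℕ) + 1 = 1 then 2
      else if (i : ℕ) + 1 = 2 then 1
      else k + 3 - ((i : ℕ) + 1) := by
  set S : ℕ → ℕ := fun i => if h : i < k then ((σ ⟨i, h⟩ : Fin k) : ℕ) else 0 with hSdef
  set Pv : ℕ → ℕ := fun v => if h : v < k then ((σ⁻¹ ⟨v, h⟩ : Fin k) : ℕ) else 0 with hPdef
  have hSval : ∀ (i : ℕ) (h : i < k), S i = ((σ ⟨i, h⟩ : Fin k) : ℕ) := by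
    intro i h; simp only [hSdef]; rw [dif_pos h]
  have hPval : ∀ (v : ℕ) (h : v < k), Pv v = ((σ⁻¹ ⟨v, h⟩ : Fin k) : ℕ) := by
    intro v h; simp only [hPdef]; rw [dif_pos h]
  have hSlt : ∀ i, i < k → S i < k := by
    intro i h; rw [hSval i h]; exact (σ ⟨i, h⟩).isLt
  have hPlt : ∀ v, v < k → Pv v < k := by
    intro v h; rw [hPval v h]; exact (σ⁻¹ ⟨v, h⟩).isLt
  have hPS : ∀ (i : ℕ) (h : i < k), Pv (S i) = i := by
    intro i h
    have h1 : S i < k := hSlt i h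
    rw [hPval (S i) h1]
    have e : (⟨S i, h1⟩ : Fin k) = σ ⟨i, h⟩ := by
      apply Fin.ext; simp [hSval i h]
    rw [e, ← Equiv.Perm.mul_apply, inv_mul_cancel, Equiv.Perm.one_apply]
  have hSP : ∀ (v : ℕ) (h : v < k), S (Pv v) = v := by
    intro v h
    have h1 : Pv v < k := hPlt v h
    rw [hSval (Pv v) h1]
    have e : (⟨Pv v, h1⟩ : Fin k) = σ⁻¹ ⟨v, h⟩ := by
      apply Fin.ext; simp [hPval v h]
    rw [e, ← Equiv.Perm.mul_apply, mul_inv_cancel, Equiv.Perm.one_apply]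
  have hSinj : ∀ i j, i < k → j < k → S i = S j → i = j := by
    intro i j hi hj he
    have h1 := hPS i hi
    rw [he, hPS j hj] at h1
    omega
  have hDσ : ∀ i, 1 ≤ i → i < k → i ≠ 2 → S i < S (i - 1) := by
    intro i h1 h2 hne
    by_contra hcon
    push_neg at hcon
    have hne2 : S (i - 1) ≠ S i := by
      intro he
      have := hSinj (i - 1) i (by omega) h2 he
      omega
    have hlt : S (i - 1) < S i := lt_of_le_of_ne hcon hne2
    have key : ∀ (p : i - 1 < k) (q : i < k),
        ((σ ⟨i - 1, p⟩ : Fin k) : ℕ) < ((σ ⟨i, q⟩ : Fin k) : ℕ) := by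
      intro p q
      rw [← hSval _ p, ← hSval _ q]
      exact hlt
    have hmem : i ∈ Dset σ := Set.mem_union_left _ ⟨h1, h2, key _ _⟩
    have := hD (Set.mem_union_left _ hmem)
    simp only [Set.mem_insert_iff, Set.mem_singleton_iff] at this
    omega
  have hDp : ∀ i, 1 ≤ i → i < k → i ≠ 2 → Pv i < Pv (i - 1) := by
    intro i h1 h2 hne
    by_contra hcon
    push_neg at hcon
    have hne2 : Pv (i - 1) ≠ Pv i := by
      intro he
      have e1 := hSP (i - 1) (by omega)
      rw [he, hSP i h2] at e1
      omega
    have hlt : Pv (i - 1) < Pv i := lt_of_le_of_ne hcon hne2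
    have key : ∀ (p : i - 1 < k) (q : i < k),
        ((σ⁻¹ ⟨i - 1, p⟩ : Fin k) : ℕ) < ((σ⁻¹ ⟨i, q⟩ : Fin k) : ℕ) := by
      intro p q
      rw [← hPval _ p, ← hPval _ q]
      exact hlt
    have hmem : i ∈ Dset σ⁻¹ := Set.mem_union_left _ ⟨h1, h2, key _ _⟩
    have := hD (Set.mem_union_right _ hmem)
    simp only [Set.mem_insert_iff, Set.mem_singleton_iff] at this
    omega
  have hschain : ∀ a b, 2 ≤ a → a < b → b < k → S b < S a :=
    chain_lemma k 2 S (fun i hi hik => hDσ i (by omega) hik (by omega))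
  have hpchain : ∀ a b, 2 ≤ a → a < b → b < k → Pv b < Pv a :=
    chain_lemma k 2 Pv (fun i hi hik => hDp i (by omega) hik (by omega))
  have hs01 : S 1 < S 0 := by simpa using hDσ 1 (by omega) (by omega) (by omega)
  have hp01 : Pv 1 < Pv 0 := by simpa using hDp 1 (by omega) (by omega) (by omega)
  rcases Nat.lt_or_ge (S 1) (S 2) with hB | hB'
  · -- ascent case
    have hy : S 1 ≤ 1 := by
      by_contra hy'
      push_neg at hy'
      have hy2 : 2 ≤ S 1 := hy'
      have hS1k : S 1 < k := hSlt 1 (by omega)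
      have hPvS1 : Pv (S 1) = 1 := hPS 1 (by omega)
      have hcases : S 1 ≤ k - 3 ∨ S 1 = k - 2 ∨ S 1 = k - 1 := by omega
      rcases hcases with h | h | h
      · have c1 : Pv (S 1 + 1) < Pv (S 1) :=
          hpchain (S 1) (S 1 + 1) hy2 (by omega) (by omega)
        have c2 : Pv (S 1 + 2) < Pv (S 1 + 1) :=
          hpchain (S 1 + 1) (S 1 + 2) (by omega) (by omega) (by omega)
        omega
      · have c1 : Pv (k - 1) < Pv (S 1) :=
          hpchain (S 1) (k - 1) hy2 (by omega) (by omega)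
        have c0 : Pv (k - 1) = 0 := by omega
        have hS0 : S 0 = k - 1 := by
          have := hSP (k - 1) (by omega)
          rw [c0] at this; exact this
        have hS2 : S 2 = k - 1 := by
          have := hSlt 2 (by omega); omega
        have := hSinj 2 0 (by omega) (by omega) (hS2.trans hS0.symm)
        omega
      · have := hSlt 2 (by omega); omega
    rcases (by omega : S 1 = 0 ∨ S 1 = 1) with hy0 | hy1
    · -- τ case
      have hPv0 : Pv 0 = 1 := by
        have := hPS 1 (by omega); rw [hy0] at this; exact this
      have hPv1 : Pv 1 = 0 := by omega
      have hS0 : S 0 = 1 := by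
        have := hSP 1 (by omega); rw [hPv1] at this; exact this
      have hbase : 2 ≤ S (k - 1) := by
        have h0 : S (k - 1) ≠ 0 := by
          intro he
          have := hSinj (k - 1) 1 (by omega) (by omega) (he.trans hy0.symm)
          omega
        have h1 : S (k - 1) ≠ 1 := by
          intro he
          have := hSinj (k - 1) 0 (by omega) (by omega) (he.trans hS0.symm)
          omega
        omega
      have hlow := low_lemma k 2 2 S hschain hbase
      have hS2 : S 2 = k - 1 := by
        have h1 := hlow 2 (by omega) (by omega)
        have h2 := hSlt 2 (by omega)
        omega
      have hup := up_lemma k (k - 1) (k - 1) S hschain (by omega)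
        (by intro i h2i hiB; have := hlow i h2i (by omega); omega) (by omega)
      right
      intro i
      have hik := i.isLt
      have hxv : ((σ i : Fin k) : ℕ) = S (i : ℕ) := (hSval (i : ℕ) i.isLt).symm
      rcases (by omega : (i : ℕ) = 0 ∨ (i : ℕ) = 1 ∨ (2 ≤ (i : ℕ) ∧ (i : ℕ) ≤ k - 1))
        with h | h | ⟨h, h'⟩
      · rw [h] at hxv
        simp only [h]
        norm_num
        omega
      · rw [h] at hxv
        simp only [h]
        norm_num
        omega
      · have e1 : (i : ℕ) + 1 ≠ 1 := by omega
        have e2 : (i : ℕ) + 1 ≠ 2 := by omega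
        rw [if_neg e1, if_neg e2]
        have := hup (i : ℕ) h h'
        omega
    · -- σ1 case
      have hx2 : 2 ≤ S 0 := by omega
      have hPx : Pv (S 0) = 0 := hPS 0 (by omega)
      have hx : S 0 = k - 1 := by
        by_contra hxc
        have h1 : S 0 < k := hSlt 0 (by omega)
        have := hpchain (S 0) (k - 1) hx2 (by omega) (by omega)
        omega
      have hPv1 : Pv 1 = 1 := by
        have := hPS 1 (by omega); rw [hy1] at this; exact this
      have hq2 : 2 ≤ Pv 0 := by omega
      have hSq : S (Pv 0) = 0 := hSP 0 (by omega)
      have hq : Pv 0 = k - 1 := by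
        by_contra hqc
        have h1 : Pv 0 < k := hPlt 0 (by omega)
        have := hschain (Pv 0) (k - 1) hq2 (by omega) (by omega)
        omega
      have hSk1 : S (k - 1) = 0 := by rw [← hq]; exact hSq
      have hbase : 2 ≤ S (k - 2) := by
        have h1 := hschain (k - 2) (k - 1) (by omega) (by omega) (by omega)
        have h2 : S (k - 2) ≠ 1 := by
          intro he
          have := hSinj (k - 2) 1 (by omega) (by omega) (he.trans hy1.symm)
          omega
        omega
      have hlow := low_lemma (k - 1) 2 2 S
        (fun a b ha hab hb => hschain a b ha hab (by omega))
        (by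
          have e : k - 1 - 1 = k - 2 := by omega
          rw [e]; exact hbase)
      have hS2 : S 2 = k - 2 := by
        have h1 := hlow 2 (by omega) (by omega)
        have h2 := hSlt 2 (by omega)
        have h3 : S 2 ≠ k - 1 := by
          intro he
          have := hSinj 2 0 (by omega) (by omega) (he.trans hx.symm)
          omega
        omega
      have hup := up_lemma (k - 1) (k - 2) (k - 2) S
        (fun a b ha hab hb => hschain a b ha hab (by omega))
        (by omega)
        (by intro i h2i hiB; have := hlow i h2i (by omega); omega) (by omega)
      left
      apply Equiv.ext
      intro x
      apply Fin.val_injective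
      have hxk := x.isLt
      have hxv : ((σ x : Fin k) : ℕ) = S (x : ℕ) := (hSval (x : ℕ) x.isLt).symm
      have hσ1x := hσ1 x
      rcases (by omega : (x : ℕ) = 0 ∨ (x : ℕ) = 1 ∨ (2 ≤ (x : ℕ) ∧ (x : ℕ) ≤ k - 2) ∨
          (x : ℕ) = k - 1) with h | h | ⟨h, h'⟩ | h
      · rw [h] at hxv
        rw [h] at hσ1x
        norm_num at hσ1x
        omega
      · rw [h] at hxv
        rw [h] at hσ1x
        norm_num at hσ1x
        omega
      · have e1 : (x : ℕ) + 1 ≠ 1 := by omega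
        have e2 : (x : ℕ) + 1 ≠ 2 := by omega
        have e3 : (x : ℕ) + 1 ≠ k := by omega
        rw [if_neg e1, if_neg e2, if_neg e3] at hσ1x
        have := hup (x : ℕ) h h'
        omega
      · rw [h] at hxv
        rw [h] at hσ1x
        have e : k - 1 + 1 = k := by omega
        rw [e] at hσ1x
        rw [if_neg (by omega), if_neg (by omega), if_pos rfl] at hσ1x
        omega
  · -- descent case: σ fully decreasing, contradict Bruhat
    exfalso
    have hs21 : S 2 < S 1 := by
      rcases lt_or_eq_of_le hB' with h | h
      · exact h
      · have := hSinj 2 1 (by omega) (by omega) h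
        omega
    have hstep : ∀ i, 1 ≤ i → i < k → S i < S (i - 1) := by
      intro i h1 h2
      rcases eq_or_ne i 2 with rfl | hne
      · simpa using hs21
      · exact hDσ i h1 h2 hne
    have hfull : ∀ a b, a < b → b < k → S b < S a := by
      intro a b hab hb
      exact chain_lemma k 0 S (fun i hi hik => hstep i (by omega) hik) a b (by omega) hab hb
    have hlowA := low_lemma k 0 0 S (fun a b _ hab hb => hfull a b hab hb) (Nat.zero_le _)
    have hS1 : k - 2 ≤ S 1 := by
      have := hlowA 1 (by omega) (by omega); omega
    have hS0 : k - 1 ≤ S 0 := by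
      have := hlowA 0 (by omega) (by omega); omega
    have h1k : (1 : ℕ) < k := by omega
    have hrank := hle ⟨1, h1k⟩ ⟨1, h1k⟩
    have hzero : rankFn σ ⟨1, h1k⟩ ⟨1, h1k⟩ = 0 := by
      unfold rankFn
      rw [Finset.card_eq_zero, Finset.filter_eq_empty_iff]
      intro u _
      rintro ⟨hu1, hu2⟩
      have hu1' : (u : ℕ) ≤ 1 := hu1
      have hu2' : ((σ u : Fin k) : ℕ) ≤ 1 := hu2
      have hσu : ((σ u : Fin k) : ℕ) = S (u : ℕ) := (hSval (u : ℕ) u.isLt).symm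
      rcases (by omega : (u : ℕ) = 0 ∨ (u : ℕ) = 1) with h | h <;> rw [h] at hσu <;> omega
    have hσ1_1 : ((σ1 ⟨1, h1k⟩ : Fin k) : ℕ) = 1 := by
      have h := hσ1 ⟨1, h1k⟩
      norm_num at h
      omega
    have hpos : 0 < rankFn σ1 ⟨1, h1k⟩ ⟨1, h1k⟩ := by
      unfold rankFn
      rw [Finset.card_pos]
      refine ⟨⟨1, h1k⟩, Finset.mem_filter.mpr ⟨Finset.mem_univ _, le_refl _, ?_⟩⟩
      rw [Fin.le_def]
      simp [hσ1_1]
    omega
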